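/- For any infinitary propositional formula F over σ, any set A ⊆ σ of atoms, and any interpretation I ⊆ σ: I is an A-stable model of F if and only if I is a stable model of the formula F ∧ ⋀_{p ∈ σ \ A} (p ∨ ¬p). -/

import Mathlib

/-- Infinitary propositional formulas over signature `σ`:
atoms, conjunctions and disjunctions of (index-)sets of formulas, implication. -/
inductive Formula (σ : Type) : Type 1
  | atom : σ → Formula σ
  | conj : (ι : Type) → (ι → Formula σ) → Formula σ
  | disj : (ι : Type) → (ι → Formula σ) → Formula σ
  | imp : Formula σ → Formula σ → Formula σ

namespace Formula

variable {σ : Type}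

/-- `⊥` is the empty disjunction. -/
def bot : Formula σ := Formula.disj Empty (fun e => e.elim)

/-- Binary conjunction `F ∧ G`. -/
def and (F G : Formula σ) : Formula σ := Formula.conj Bool (fun b => if b then F else G)

/-- Binary disjunction `F ∨ G`. -/
def or (F G : Formula σ) : Formula σ := Formula.disj Bool (fun b => if b then F else G)

/-- Negation `¬F` abbreviates `F → ⊥`. -/
def neg (F : Formula σ) : Formula σ := Formula.imp F bot

/-- Conjunction of a set of atoms. -/
def conjAtoms (S : Set σ) : Formula σ := Formula.conj S (fun p => Formula.atom p.val)

/-- Satisfaction of an infinitary formula by an interpretation `I ⊆ σ`. -/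
def Sat (I : Set σ) : Formula σ → Prop
  | .atom p => p ∈ I
  | .conj _ f => ∀ i, Sat I (f i)
  | .disj _ f => ∃ i, Sat I (f i)
  | .imp F G => Sat I F → Sat I G

open Classical in
/-- The reduct `F^I`. -/
noncomputable def reduct (I : Set σ) : Formula σ → Formula σ
  | .atom p => if p ∈ I then Formula.atom p else bot
  | .conj ι f => Formula.conj ι (fun i => reduct I (f i))
  | .disj ι f => Formula.disj ι (fun i => reduct I (f i))
  | .imp F G => if Sat I (Formula.imp F G) then Formula.imp (reduct I F) (reduct I G) else bot

/-- `I` is an `A`-stable model of `F`: `I` is minimal w.r.t. `≤_A`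
(`J ≤_A I` iff `J ⊆ I` and `I \ J ⊆ A`) among interpretations satisfying `F^I`. -/
def AStable (A : Set σ) (I : Set σ) (F : Formula σ) : Prop :=
  Sat I (reduct I F) ∧ ∀ J : Set σ, J ⊆ I → I \ J ⊆ A → Sat J (reduct I F) → J = I

/-- A stable model is a `σ`-stable model. -/
def Stable (I : Set σ) (F : Formula σ) : Prop := AStable Set.univ I F

/-- The strictly positive atoms `P(F)`. -/
def spos : Formula σ → Set σ
  | .atom p => {p}
  | .conj _ f => ⋃ i, spos (f i)
  | .disj _ f => ⋃ i, spos (f i)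
  | .imp _ H => spos H

/-- `F` is (syntactically) the formula `⊥`, i.e. an empty disjunction. -/
def IsBot : Formula σ → Prop
  | .disj ι _ => IsEmpty ι
  | _ => False

open Classical in
mutual
/-- Positive nonnegated atoms `Pnn(F)`. -/
noncomputable def pnn : Formula σ → Set σ
  | .atom p => {p}
  | .conj _ f => ⋃ i, pnn (f i)
  | .disj _ f => ⋃ i, pnn (f i)
  | .imp G H => if IsBot H then ∅ else nnn G ∪ pnn H

/-- Negative nonnegated atoms `Nnn(F)`. -/
noncomputable def nnn : Formula σ → Set σ
  | .atom _ => ∅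
  | .conj _ f => ⋃ i, nnn (f i)
  | .disj _ f => ⋃ i, nnn (f i)
  | .imp G H => if IsBot H then ∅ else pnn G ∪ nnn H
end

/-- The rules of a formula, as antecedent/consequent pairs. -/
def rules : Formula σ → Set (Formula σ × Formula σ)
  | .atom _ => ∅
  | .conj _ f => ⋃ i, rules (f i)
  | .disj _ f => ⋃ i, rules (f i)
  | .imp G H => insert (G, H) (rules H)

/-- Edge relation of the positive dependency graph `DG_A[F]` (vertex set `A`). -/
noncomputable def DGEdge (F : Formula σ) (A : Set σ) (p q : σ) : Prop :=
  p ∈ A ∧ q ∈ A ∧ ∃ R ∈ rules F, p ∈ spos R.2 ∧ q ∈ pnn R.1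

/-- The atoms occurring in a formula. -/
def atoms : Formula σ → Set σ
  | .atom p => {p}
  | .conj _ f => ⋃ i, atoms (f i)
  | .disj _ f => ⋃ i, atoms (f i)
  | .imp G H => atoms G ∪ atoms H

/-- `G` is a definition for the set `Q` of atoms: a conjunction of formulas
`H ∧ C^∧ → q` with `q ∈ Q`, `C ⊆ Q`, and no atom of `Q` occurring in `H`. -/
def IsDefinition (Q : Set σ) (G : Formula σ) : Prop :=
  ∃ (ι : Type) (g : ι → Formula σ), G = Formula.conj ι g ∧
    ∀ i, ∃ (H : Formula σ) (C : Set σ) (q : σ),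
      q ∈ Q ∧ C ⊆ Q ∧ (∀ p ∈ Q, p ∉ atoms H) ∧
      g i = Formula.imp (Formula.and H (conjAtoms C)) (Formula.atom q)

end Formula

section Graph

variable {V : Type*}

/-- An infinite walk in the directed graph with edge relation `E`. -/
def IsInfWalk (E : V → V → Prop) (w : ℕ → V) : Prop := ∀ i, E (w i) (w (i + 1))

/-- The partition `{P₁, P₂}` is infinitely separable: every infinite walk
visits `P₁` or `P₂` only finitely often. -/
def InfSeparable (E : V → V → Prop) (P1 P2 : Set V) : Prop :=
  ∀ w : ℕ → V, IsInfWalk E w → {i | w i ∈ P1}.Finite ∨ {i | w i ∈ P2}.Finite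

/-- `u` and `v` are in the same strongly connected component:
each is reachable from the other. -/
def SameSCC (E : V → V → Prop) (u v : V) : Prop :=
  Relation.ReflTransGen E u v ∧ Relation.ReflTransGen E v u

/-- The partition `{P₁, P₂}` is separable: every strongly connected
component is contained in `P₁` or in `P₂`. -/
def Separable (E : V → V → Prop) (P1 P2 : Set V) : Prop :=
  ∀ u v, SameSCC E u v → ((u ∈ P1 ∧ v ∈ P1) ∨ (u ∈ P2 ∧ v ∈ P2))

end Graph

open Formula in
lemma sat_bot {σ : Type} (J : Set σ) : ¬ Sat J (bot : Formula σ) := by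
  simp [bot, Sat]

open Formula in
lemma sat_reduct_bot {σ : Type} (I J : Set σ) : ¬ Sat J (reduct I (bot : Formula σ)) := by
  simp [bot, reduct, Sat]

open Formula in
lemma sat_reduct_choice {σ : Type} (A I J : Set σ) :
    Sat J (reduct I (Formula.conj (↥Aᶜ)
      (fun p => Formula.or (Formula.atom p.val) (Formula.neg (Formula.atom p.val)))))
    ↔ I ∩ Aᶜ ⊆ J := by
  simp only [reduct, Sat]
  constructor
  · intro h x hx
    have := h ⟨x, hx.2⟩
    simp only [Formula.or] at this
    obtain ⟨b, hb⟩ := this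
    cases b
    · -- false branch: neg
      simp only [if_neg (by simp : ¬ (false = true))] at hb
      simp only [neg, reduct] at hb
      by_cases hxI : Sat I (Formula.imp (Formula.atom x) bot)
      · exact absurd hx.1 (by simpa [Sat, bot] using hxI)
      · rw [if_neg hxI] at hb
        exact absurd hb (sat_bot J)
    · simp only [if_pos rfl, ↓reduceIte] at hb
      simp only [reduct] at hb
      by_cases hxI : x ∈ I
      · rw [if_pos hxI] at hb; exact hb
      · rw [if_neg hxI] at hb; exact absurd hb (sat_bot J)
  · intro h p
    by_cases hpI : p.val ∈ I
    · refine ⟨true, ?_⟩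
      simp only [Formula.or, if_pos rfl, ↓reduceIte, reduct, if_pos hpI]
      exact h ⟨hpI, p.2⟩
    · refine ⟨false, ?_⟩
      have hsat : Sat I (Formula.imp (Formula.atom p.val) bot) := by
        intro hc; exact absurd hc hpI
      simp only [Formula.or, if_neg (by simp : ¬ (false = true)), neg, reduct, if_pos hsat]
      intro hc
      rw [if_neg hpI] at hc
      exact absurd hc (sat_bot J)

/-- `I` is an `A`-stable model of `F` iff `I` is a stable model of
`F ∧ ⋀_{p ∈ σ \ A} (p ∨ ¬p)`. -/
theorem astable_iff_stable_with_choice {σ : Type}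
    (F : Formula σ) (A I : Set σ) :
    Formula.AStable A I F ↔
      Formula.Stable I
        (Formula.and F
          (Formula.conj (↥Aᶜ)
            (fun p => Formula.or (Formula.atom p.val) (Formula.neg (Formula.atom p.val))))) := by
  constructor
  · rintro ⟨h1, h2⟩
    constructor
    · simp only [Formula.and, Formula.reduct, Formula.Sat]
      intro b
      cases b
      · exact (sat_reduct_choice A I I).2 (fun x hx => hx.1)
      · exact h1
    · intro J hJI _ hsat
      simp only [Formula.and, Formula.reduct, Formula.Sat] at hsat
      have hF := hsat true
      have hC := (sat_reduct_choice A I J).1 (hsat false)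
      refine h2 J hJI ?_ hF
      intro x hx
      by_contra hxA
      exact hx.2 (hC ⟨hx.1, hxA⟩)
  · rintro ⟨h1, h2⟩
    simp only [Formula.and, Formula.reduct, Formula.Sat] at h1
    constructor
    · exact h1 true
    · intro J hJI hdiff hsat
      refine h2 J hJI (fun _ _ => trivial) ?_
      simp only [Formula.and, Formula.reduct, Formula.Sat]
      intro b
      cases b
      · refine (sat_reduct_choice A I J).2 ?_
        intro x hx
        by_contra hxJ
        exact hx.2 (hdiff ⟨hx.1, hxJ⟩)
      · exact hsat
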